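/- Let D be a division ring and R : ℤ → D a sequence. Assume the genericity condition: for every finite square submatrix M of the bi-infinite Hankel matrix H = (R_{−a−b})_{a,b∈ℤ} (rows and columns indexed by arbitrary finite subsets of ℤ of equal cardinality) and every entry position (p,q) of M, the quasi-determinant |M|_{p,q} is nonzero. Then the quasi-Wronskians of R satisfy the discrete noncommutative Hirota equation: for all i ≥ 1 and n ∈ ℤ, Δ_{i+1,n} = Δ_{i,n+1} − Δ_{i,n}·(Δ_{i,n−1}⁻¹ − Δ_{i−1,n}⁻¹)·Δ_{i,n}, with the convention Δ_{0,n}⁻¹ = 0 (so for i = 1 this reads Δ_{2,n} = Δ_{1,n+1} − Δ_{1,n}·Δ_{1,n−1}⁻¹·Δ_{1,n}). -/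

import Mathlib

namespace Stmt10

/-- The quasi-determinant `|A|_{p,q}` of an `n×n` matrix over a division ring, defined
recursively by `|A|_{1,1} = a_{1,1}` for `n = 1` and, for `n ≥ 2`,
`|A|_{p,q} = a_{p,q} - Σ_{i≠p, j≠q} a_{p,j}·(|A^{p,q}|_{i,j})⁻¹·a_{i,q}`,
where `A^{p,q}` deletes row `p` and column `q` (inverses in `D`, with `0⁻¹ = 0`). -/
def quasiDet {D : Type*} [DivisionRing D] :
    (n : ℕ) → Matrix (Fin n) (Fin n) D → Fin n → Fin n → D
  | 0, _, p, _ => p.elim0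
  | 1, A, p, q => A p q
  | (n+2), A, p, q =>
      A p q - ∑ i : Fin (n + 1), ∑ j : Fin (n + 1),
        A p (q.succAbove j) *
          (quasiDet (n + 1) (A.submatrix p.succAbove q.succAbove) i j)⁻¹ *
          A (p.succAbove i) q

/-- The quasi-Wronskians of a sequence `R : ℤ → D`:
`Δ_{i,n} = |(R_{n+i+1-a-b})_{1≤a,b≤i}|_{1,1}` for `i ≥ 1`, and `Δ_{0,n} = 0`. -/
def Delta {D : Type*} [DivisionRing D] (R : ℤ → D) : ℕ → ℤ → D
  | 0, _ => 0
  | (i+1), n => quasiDet (i + 1)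
      (Matrix.of fun a b : Fin (i + 1) =>
        R (n + (i + 1 : ℕ) + 1 - ((a : ℤ) + 1) - ((b : ℤ) + 1))) 0 0

section Aux

set_option linter.unusedSectionVars false



variable {D : Type*} [DivisionRing D]

open Matrix Finset

lemma inv_unique {n : ℕ} {A P P' : Matrix (Fin n) (Fin n) D}
    (h1 : A * P = 1) (h2 : P' * A = 1) : P' = P := by
  calc P' = P' * (A * P) := by rw [h1, mul_one]
    _ = (P' * A) * P := by rw [mul_assoc]
    _ = P := by rw [h2, one_mul]

lemma hneg1 {n : ℕ} (f g : Fin n → D) (c : D) :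
    ∑ j, f j * -(g j * c) = -((∑ j, f j * g j) * c) := by
  calc ∑ j, f j * -(g j * c) = ∑ j, -(f j * g j * c) :=
        Finset.sum_congr rfl fun j _ => by noncomm_ring
    _ = -∑ j, f j * g j * c := by rw [Finset.sum_neg_distrib]
    _ = -((∑ j, f j * g j) * c) := by rw [Finset.sum_mul]

lemma hneg2 {n : ℕ} (f g : Fin n → D) (c : D) :
    ∑ j, -(c * f j) * g j = -(c * ∑ j, f j * g j) := by
  calc ∑ j, -(c * f j) * g j = ∑ j, -(c * (f j * g j)) :=
        Finset.sum_congr rfl fun j _ => by noncomm_ring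
    _ = -∑ j, c * (f j * g j) := by rw [Finset.sum_neg_distrib]
    _ = -(c * ∑ j, f j * g j) := by rw [Finset.mul_sum]

lemma hadd1 {n : ℕ} (f g h : Fin n → D) (c e : D) :
    ∑ j, f j * (g j + h j * c * e) = (∑ j, f j * g j) + (∑ j, f j * h j) * (c * e) := by
  calc ∑ j, f j * (g j + h j * c * e) = ∑ j, (f j * g j + (f j * h j) * (c * e)) :=
        Finset.sum_congr rfl fun j _ => by noncomm_ring
    _ = (∑ j, f j * g j) + ∑ j, (f j * h j) * (c * e) := Finset.sum_add_distrib
    _ = (∑ j, f j * g j) + (∑ j, f j * h j) * (c * e) := by rw [Finset.sum_mul]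

lemma hadd2 {n : ℕ} (f g h : Fin n → D) (c e : D) :
    ∑ a, (f a + c * e * g a) * h a = (∑ a, f a * h a) + c * (e * ∑ a, g a * h a) := by
  calc ∑ a, (f a + c * e * g a) * h a = ∑ a, (f a * h a + c * (e * (g a * h a))) :=
        Finset.sum_congr rfl fun a _ => by noncomm_ring
    _ = (∑ a, f a * h a) + ∑ a, c * (e * (g a * h a)) := Finset.sum_add_distrib
    _ = (∑ a, f a * h a) + c * (e * ∑ a, g a * h a) := by rw [← Finset.mul_sum, ← Finset.mul_sum]

lemma exists_blockInverse {n : ℕ} (A : Matrix (Fin (n+1)) (Fin (n+1)) D)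
    (p q : Fin (n+1)) (C : Matrix (Fin n) (Fin n) D)
    (hBC : A.submatrix p.succAbove q.succAbove * C = 1)
    (hCB : C * A.submatrix p.succAbove q.succAbove = 1)
    (s : D)
    (hs : s = A p q - ∑ i, ∑ j, A p (q.succAbove j) * C j i * A (p.succAbove i) q)
    (hs0 : s ≠ 0) :
    ∃ P : Matrix (Fin (n+1)) (Fin (n+1)) D, A * P = 1 ∧ P * A = 1 ∧ P q p = s⁻¹ := by
  have hBC' : ∀ i a, (∑ j, A (p.succAbove i) (q.succAbove j) * C j a) = if i = a then 1 else 0 := by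
    intro i a
    have h := congrFun (congrFun hBC i) a
    simpa [Matrix.mul_apply, Matrix.one_apply] using h
  have hCB' : ∀ j b, (∑ a, C j a * A (p.succAbove a) (q.succAbove b)) = if j = b then 1 else 0 := by
    intro j b
    have h := congrFun (congrFun hCB j) b
    simpa [Matrix.mul_apply, Matrix.one_apply] using h
  have hS1 : ∑ j, A p (q.succAbove j) * (∑ i, C j i * A (p.succAbove i) q) = A p q - s := by
    rw [hs, sub_sub_cancel, Finset.sum_comm]
    exact Finset.sum_congr rfl fun j _ => by
      rw [Finset.mul_sum]
      exact Finset.sum_congr rfl fun i _ => by rw [mul_assoc]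
  have hS2 : ∑ a, (∑ j, A p (q.succAbove j) * C j a) * A (p.succAbove a) q = A p q - s := by
    rw [hs, sub_sub_cancel]
    exact Finset.sum_congr rfl fun i _ => by rw [Finset.sum_mul]
  have hBv : ∀ i, ∑ j, A (p.succAbove i) (q.succAbove j) * (∑ i', C j i' * A (p.succAbove i') q)
      = A (p.succAbove i) q := by
    intro i
    calc ∑ j, A (p.succAbove i) (q.succAbove j) * (∑ i', C j i' * A (p.succAbove i') q)
        = ∑ j, ∑ a, A (p.succAbove i) (q.succAbove j) * C j a * A (p.succAbove a) q :=
          Finset.sum_congr rfl fun j _ => by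
            rw [Finset.mul_sum]
            exact Finset.sum_congr rfl fun a _ => by rw [mul_assoc]
      _ = ∑ a, ∑ j, A (p.succAbove i) (q.succAbove j) * C j a * A (p.succAbove a) q :=
          Finset.sum_comm
      _ = ∑ a, (∑ j, A (p.succAbove i) (q.succAbove j) * C j a) * A (p.succAbove a) q :=
          Finset.sum_congr rfl fun a _ => (Finset.sum_mul _ _ _).symm
      _ = ∑ a, (if i = a then 1 else 0) * A (p.succAbove a) q :=
          Finset.sum_congr rfl fun a _ => by rw [hBC']
      _ = A (p.succAbove i) q := by simp
  have huB : ∀ b, ∑ a, (∑ j, A p (q.succAbove j) * C j a) * A (p.succAbove a) (q.succAbove b)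
      = A p (q.succAbove b) := by
    intro b
    calc ∑ a, (∑ j, A p (q.succAbove j) * C j a) * A (p.succAbove a) (q.succAbove b)
        = ∑ a, ∑ j, A p (q.succAbove j) * (C j a * A (p.succAbove a) (q.succAbove b)) :=
          Finset.sum_congr rfl fun a _ => by
            rw [Finset.sum_mul]
            exact Finset.sum_congr rfl fun j _ => by rw [mul_assoc]
      _ = ∑ j, ∑ a, A p (q.succAbove j) * (C j a * A (p.succAbove a) (q.succAbove b)) :=
          Finset.sum_comm
      _ = ∑ j, A p (q.succAbove j) * ∑ a, C j a * A (p.succAbove a) (q.succAbove b) :=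
          Finset.sum_congr rfl fun j _ => (Finset.mul_sum _ _ _).symm
      _ = ∑ j, A p (q.succAbove j) * (if j = b then 1 else 0) :=
          Finset.sum_congr rfl fun j _ => by rw [hCB']
      _ = A p (q.succAbove b) := by simp
  refine ⟨Matrix.of (q.insertNth (α := fun _ => Fin (n+1) → D)
      (p.insertNth (α := fun _ => D) s⁻¹
        (fun a => -(s⁻¹ * ∑ j, A p (q.succAbove j) * C j a)))
      (fun j => p.insertNth (α := fun _ => D)
        (-((∑ i, C j i * A (p.succAbove i) q) * s⁻¹))
        (fun a => C j a + (∑ i, C j i * A (p.succAbove i) q) * s⁻¹ *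
          (∑ j', A p (q.succAbove j') * C j' a)))),
    ?_, ?_, by simp⟩
  · -- A * P = 1
    ext a' b'
    rw [Matrix.mul_apply, Fin.sum_univ_succAbove _ q]
    simp only [Matrix.of_apply, Fin.insertNth_apply_same, Fin.insertNth_apply_succAbove]
    rcases eq_or_ne p a' with rfl | ha
    · rcases eq_or_ne p b' with rfl | hb
      · simp only [Fin.insertNth_apply_same]
        rw [hneg1, hS1, Matrix.one_apply_eq,
          show (A p q - s) * s⁻¹ = A p q * s⁻¹ - 1 from by
            rw [sub_mul, mul_inv_cancel₀ hs0]]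
        noncomm_ring
      · obtain ⟨b, rfl⟩ := Fin.exists_succAbove_eq hb.symm
        simp only [Fin.insertNth_apply_succAbove]
        rw [hadd1, hS1, Matrix.one_apply_ne (Fin.succAbove_ne p b).symm,
          show (A p q - s) * (s⁻¹ * (∑ j, A p (q.succAbove j) * C j b))
              = A p q * (s⁻¹ * (∑ j, A p (q.succAbove j) * C j b))
                - (∑ j, A p (q.succAbove j) * C j b) from by
            rw [sub_mul]
            congr 1
            rw [← mul_assoc, mul_inv_cancel₀ hs0, one_mul]]
        noncomm_ring
    · obtain ⟨i, rfl⟩ := Fin.exists_succAbove_eq ha.symm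
      rcases eq_or_ne p b' with rfl | hb
      · simp only [Fin.insertNth_apply_same]
        rw [hneg1, hBv, Matrix.one_apply_ne (Fin.succAbove_ne p i)]
        exact add_neg_cancel _
      · obtain ⟨b, rfl⟩ := Fin.exists_succAbove_eq hb.symm
        simp only [Fin.insertNth_apply_succAbove]
        rw [hadd1, hBC', hBv, Matrix.one_apply]
        simp only [Fin.succAbove_right_inj]
        noncomm_ring
  · -- P * A = 1
    ext c' b'
    rw [Matrix.mul_apply, Fin.sum_univ_succAbove _ p]
    rcases eq_or_ne q c' with rfl | hc
    · simp only [Matrix.of_apply, Fin.insertNth_apply_same, Fin.insertNth_apply_succAbove]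
      rcases eq_or_ne q b' with rfl | hb
      · rw [hneg2, hS2, Matrix.one_apply_eq,
          show s⁻¹ * (A p q - s) = s⁻¹ * A p q - 1 from by
            rw [mul_sub, inv_mul_cancel₀ hs0]]
        noncomm_ring
      · obtain ⟨b, rfl⟩ := Fin.exists_succAbove_eq hb.symm
        rw [hneg2, huB, Matrix.one_apply_ne (Fin.succAbove_ne q b).symm]
        exact add_neg_cancel _
    · obtain ⟨j, rfl⟩ := Fin.exists_succAbove_eq hc.symm
      simp only [Matrix.of_apply, Fin.insertNth_apply_same, Fin.insertNth_apply_succAbove]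
      rcases eq_or_ne q b' with rfl | hb
      · rw [hadd2, hS2, Matrix.one_apply_ne (Fin.succAbove_ne q j),
          show s⁻¹ * (A p q - s) = s⁻¹ * A p q - 1 from by
            rw [mul_sub, inv_mul_cancel₀ hs0]]
        noncomm_ring
      · obtain ⟨b, rfl⟩ := Fin.exists_succAbove_eq hb.symm
        rw [hadd2, hCB', huB, Matrix.one_apply]
        simp only [Fin.succAbove_right_inj]
        noncomm_ring


variable {D : Type*} [DivisionRing D]

open Matrix Finset

lemma hsub1 {n : ℕ} (f g h : Fin n → D) (c e : D) :
    ∑ j, f j * (g j - h j * c * e) = (∑ j, f j * g j) - (∑ j, f j * h j) * (c * e) := by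
  calc ∑ j, f j * (g j - h j * c * e) = ∑ j, (f j * g j - (f j * h j) * (c * e)) :=
        Finset.sum_congr rfl fun j _ => by noncomm_ring
    _ = (∑ j, f j * g j) - ∑ j, (f j * h j) * (c * e) := Finset.sum_sub_distrib _ _
    _ = _ := by rw [Finset.sum_mul]

lemma hsub2 {n : ℕ} (f g h : Fin n → D) (c : D) :
    ∑ i, (f i - c * g i) * h i = (∑ i, f i * h i) - c * ∑ i, g i * h i := by
  calc ∑ i, (f i - c * g i) * h i = ∑ i, (f i * h i - c * (g i * h i)) :=
        Finset.sum_congr rfl fun i _ => by noncomm_ring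
    _ = (∑ i, f i * h i) - ∑ i, c * (g i * h i) := Finset.sum_sub_distrib _ _
    _ = _ := by rw [Finset.mul_sum]

lemma submatrix_inverse {n : ℕ} (A P : Matrix (Fin (n+1)) (Fin (n+1)) D)
    (hAP : A * P = 1) (hPA : P * A = 1) (p₀ q₀ : Fin (n+1)) (hβ : P q₀ p₀ ≠ 0) :
    A.submatrix p₀.succAbove q₀.succAbove *
      (Matrix.of fun j i => P (q₀.succAbove j) (p₀.succAbove i)
          - P (q₀.succAbove j) p₀ * (P q₀ p₀)⁻¹ * P q₀ (p₀.succAbove i)) = 1 ∧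
    (Matrix.of fun j i => P (q₀.succAbove j) (p₀.succAbove i)
          - P (q₀.succAbove j) p₀ * (P q₀ p₀)⁻¹ * P q₀ (p₀.succAbove i)) *
      A.submatrix p₀.succAbove q₀.succAbove = 1 := by
  have hAP' : ∀ r c, (∑ k, A r k * P k c) = if r = c then 1 else 0 := by
    intro r c
    have h := congrFun (congrFun hAP r) c
    simpa [Matrix.mul_apply, Matrix.one_apply] using h
  have hPA' : ∀ r c, (∑ k, P r k * A k c) = if r = c then 1 else 0 := by
    intro r c
    have h := congrFun (congrFun hPA r) c
    simpa [Matrix.mul_apply, Matrix.one_apply] using h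
  have hsplit1 : ∀ r c, ∑ j, A r (q₀.succAbove j) * P (q₀.succAbove j) c
      = (if r = c then 1 else 0) - A r q₀ * P q₀ c := by
    intro r c
    have h := hAP' r c
    rw [Fin.sum_univ_succAbove _ q₀] at h
    exact eq_sub_of_add_eq' h
  have hsplit2 : ∀ r c, ∑ i, P r (p₀.succAbove i) * A (p₀.succAbove i) c
      = (if r = c then 1 else 0) - P r p₀ * A p₀ c := by
    intro r c
    have h := hPA' r c
    rw [Fin.sum_univ_succAbove _ p₀] at h
    exact eq_sub_of_add_eq' h
  constructor
  · ext i a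
    rw [Matrix.mul_apply]
    simp only [Matrix.submatrix_apply, Matrix.of_apply]
    rw [hsub1, hsplit1, hsplit1, if_neg (Fin.succAbove_ne p₀ i), Matrix.one_apply]
    simp only [Fin.succAbove_right_inj]
    rw [show (0 - A (p₀.succAbove i) q₀ * P q₀ p₀) * ((P q₀ p₀)⁻¹ * P q₀ (p₀.succAbove a))
        = -(A (p₀.succAbove i) q₀ * P q₀ (p₀.succAbove a)) from by
      rw [zero_sub, neg_mul, mul_assoc, ← mul_assoc (P q₀ p₀), mul_inv_cancel₀ hβ, one_mul]]
    noncomm_ring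
  · ext j b
    rw [Matrix.mul_apply]
    simp only [Matrix.submatrix_apply, Matrix.of_apply]
    rw [hsub2, hsplit2, hsplit2, if_neg (Fin.succAbove_ne q₀ b).symm, Matrix.one_apply]
    simp only [Fin.succAbove_right_inj]
    rw [show P (q₀.succAbove j) p₀ * (P q₀ p₀)⁻¹ * (0 - P q₀ p₀ * A p₀ (q₀.succAbove b))
        = -(P (q₀.succAbove j) p₀ * A p₀ (q₀.succAbove b)) from by
      rw [zero_sub, mul_neg, mul_assoc (P (q₀.succAbove j) p₀), ← mul_assoc (P q₀ p₀)⁻¹,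
        inv_mul_cancel₀ hβ, one_mul]]
    noncomm_ring


lemma hankel_quasiInv (R : ℤ → D)
    (hgen : ∀ k : ℕ, ∀ ρ γ : Fin (k + 1) → ℤ,
      Function.Injective ρ → Function.Injective γ →
      ∀ p q : Fin (k + 1),
        quasiDet (k + 1) (Matrix.of fun a b => R (-(ρ a) - γ b)) p q ≠ 0) :
    ∀ k : ℕ, ∀ ρ γ : Fin (k + 1) → ℤ, Function.Injective ρ → Function.Injective γ →
      (Matrix.of fun a b => R (-(ρ a) - γ b)) *
        (Matrix.of fun q p =>
          (quasiDet (k + 1) (Matrix.of fun a b => R (-(ρ a) - γ b)) p q)⁻¹) = 1 ∧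
      (Matrix.of fun q p =>
          (quasiDet (k + 1) (Matrix.of fun a b => R (-(ρ a) - γ b)) p q)⁻¹) *
        (Matrix.of fun a b => R (-(ρ a) - γ b)) = 1 := by
  intro k
  induction k with
  | zero =>
    intro ρ γ hρ hγ
    have h0 : (Matrix.of fun a b : Fin 1 => R (-(ρ a) - γ b)) 0 0 ≠ 0 :=
      hgen 0 ρ γ hρ hγ 0 0
    constructor
    · ext a b
      fin_cases a; fin_cases b
      simp only [Matrix.mul_apply, Fin.sum_univ_succ, Fin.sum_univ_zero, add_zero,
        Matrix.of_apply, Matrix.one_apply_eq]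
      exact mul_inv_cancel₀ h0
    · ext a b
      fin_cases a; fin_cases b
      simp only [Matrix.mul_apply, Fin.sum_univ_succ, Fin.sum_univ_zero, add_zero,
        Matrix.of_apply, Matrix.one_apply_eq]
      exact inv_mul_cancel₀ h0
  | succ k ih =>
    intro ρ γ hρ hγ
    set A := Matrix.of fun a b : Fin (k+2) => R (-(ρ a) - γ b) with hA
    have key : ∀ p q : Fin (k+2),
        ∃ P, A * P = 1 ∧ P * A = 1 ∧ P q p = (quasiDet (k+2) A p q)⁻¹ := by
      intro p q
      obtain ⟨h1, h2⟩ := ih (ρ ∘ p.succAbove) (γ ∘ q.succAbove)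
        (hρ.comp Fin.succAbove_right_injective) (hγ.comp Fin.succAbove_right_injective)
      have hsub : (Matrix.of fun a b : Fin (k+1) =>
          R (-((ρ ∘ p.succAbove) a) - (γ ∘ q.succAbove) b)) = A.submatrix p.succAbove q.succAbove :=
        rfl
      rw [hsub] at h1 h2
      exact exists_blockInverse A p q _ h1 h2 (quasiDet (k+2) A p q) rfl
        (hgen (k+1) ρ γ hρ hγ p q)
    obtain ⟨P₀, h1, h2, _⟩ := key 0 0
    have hQ : (Matrix.of fun q p => (quasiDet (k+2) A p q)⁻¹) = P₀ := by
      ext q' p'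
      obtain ⟨P', h1', h2', h3'⟩ := key p' q'
      rw [Matrix.of_apply, ← h3', inv_unique h1 h2']
    exact ⟨hQ ▸ h1, hQ ▸ h2⟩


def Hmat (R : ℤ → D) (m : ℤ) (k : ℕ) : Matrix (Fin k) (Fin k) D :=
  Matrix.of fun a b => R (m - (a : ℤ) - (b : ℤ))

def HQ (R : ℤ → D) (m : ℤ) (k : ℕ) : Matrix (Fin (k+1)) (Fin (k+1)) D :=
  Matrix.of fun q p => (quasiDet (k+1) (Hmat R m (k+1)) p q)⁻¹

lemma Hmat_form (R : ℤ → D) (m : ℤ) (k : ℕ) :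
    Hmat R m (k+1) = Matrix.of fun a b : Fin (k+1) => R (-((a : ℤ)) - ((b : ℤ) - m)) := by
  ext a b
  simp only [Hmat, Matrix.of_apply]
  congr 1
  ring

lemma cast_inj (k : ℕ) : Function.Injective (fun a : Fin (k+1) => (a : ℤ)) := by
  intro a b h
  simp only at h
  exact Fin.ext (by omega)

lemma cast_sub_inj (k : ℕ) (m : ℤ) : Function.Injective (fun b : Fin (k+1) => (b : ℤ) - m) := by
  intro a b h
  simp only at h
  exact Fin.ext (by omega)

variable (R : ℤ → D)
variable (hgen : ∀ k : ℕ, ∀ ρ γ : Fin (k + 1) → ℤ,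
      Function.Injective ρ → Function.Injective γ →
      ∀ p q : Fin (k + 1),
        quasiDet (k + 1) (Matrix.of fun a b => R (-(ρ a) - γ b)) p q ≠ 0)

include hgen

lemma Hq_ne (m : ℤ) (k : ℕ) (p q : Fin (k+1)) :
    quasiDet (k+1) (Hmat R m (k+1)) p q ≠ 0 := by
  rw [Hmat_form]
  exact hgen k _ _ (cast_inj k) (cast_sub_inj k m) p q

lemma Hmat_inv (m : ℤ) (k : ℕ) :
    Hmat R m (k+1) * HQ R m k = 1 ∧ HQ R m k * Hmat R m (k+1) = 1 := by
  have h := hankel_quasiInv R hgen k (fun a : Fin (k+1) => (a : ℤ))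
    (fun b : Fin (k+1) => (b : ℤ) - m) (cast_inj k) (cast_sub_inj k m)
  rw [← Hmat_form] at h
  exact h


omit hgen

lemma Hsub_cc (m : ℤ) (k : ℕ) :
    (Hmat R m (k+1)).submatrix Fin.castSucc Fin.castSucc = Hmat R m k := by
  ext a b
  simp [Hmat, Fin.coe_castSucc]

lemma Hsub_cs (m : ℤ) (k : ℕ) :
    (Hmat R m (k+1)).submatrix Fin.castSucc Fin.succ = Hmat R (m-1) k := by
  ext a b
  simp only [Hmat, Matrix.submatrix_apply, Matrix.of_apply]
  congr 1
  simp only [Fin.coe_castSucc, Fin.val_succ]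
  push_cast
  ring

lemma Hsub_sc (m : ℤ) (k : ℕ) :
    (Hmat R m (k+1)).submatrix Fin.succ Fin.castSucc = Hmat R (m-1) k := by
  ext a b
  simp only [Hmat, Matrix.submatrix_apply, Matrix.of_apply]
  congr 1
  simp only [Fin.coe_castSucc, Fin.val_succ]
  push_cast
  ring

lemma Hsub_ss (m : ℤ) (k : ℕ) :
    (Hmat R m (k+1)).submatrix Fin.succ Fin.succ = Hmat R (m-2) k := by
  ext a b
  simp only [Hmat, Matrix.submatrix_apply, Matrix.of_apply]
  congr 1
  simp only [Fin.val_succ]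
  push_cast
  ring

lemma Delta_eq (k : ℕ) (n m : ℤ) (hm : m = n + (k : ℤ)) :
    Delta R (k+1) n = quasiDet (k+1) (Hmat R m (k+1)) 0 0 := by
  show quasiDet (k+1) _ 0 0 = quasiDet (k+1) (Hmat R m (k+1)) 0 0
  congr 1
  ext a b
  simp only [Hmat, Matrix.of_apply]
  congr 1
  subst hm
  push_cast
  ring


include hgen in
lemma hirota_main (j : ℕ) (n : ℤ) :
    Delta R (j+2+1) n =
      Delta R (j+1+1) (n + 1) -
        Delta R (j+1+1) n * ((Delta R (j+1+1) (n - 1))⁻¹ - (Delta R (j+1) n)⁻¹) *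
          Delta R (j+1+1) n := by
  set m : ℤ := n + (j : ℤ) + 2 with hm
  rw [Delta_eq R (j+2) n m (by push_cast; ring),
      Delta_eq R (j+1) (n+1) m (by push_cast; ring),
      Delta_eq R (j+1) n (m-1) (by push_cast; ring),
      Delta_eq R (j+1) (n-1) (m-2) (by push_cast; ring),
      Delta_eq R j n (m-2) (by push_cast; ring)]
  obtain ⟨hMN, hNM⟩ := Hmat_inv R hgen m (j+2)
  obtain ⟨hVN, hNV⟩ := Hmat_inv R hgen (m-2) (j+1)
  obtain ⟨hTQ, hQT⟩ := Hmat_inv R hgen m (j+1)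
  obtain ⟨hWQ, hQW⟩ := Hmat_inv R hgen (m-1) (j+1)
  obtain ⟨hEQ, hQE⟩ := Hmat_inv R hgen (m-2) j
  -- α : delete last row/col of M
  have hα := submatrix_inverse (Hmat R m (j+2+1)) (HQ R m (j+2)) hMN hNM
    (Fin.last (j+2)) (Fin.last (j+2))
    (inv_ne_zero (Hq_ne R hgen m (j+2) (Fin.last (j+2)) (Fin.last (j+2))))
  rw [Fin.succAbove_last, Hsub_cc] at hα
  have hαmat : HQ R m (j+1) = _ := inv_unique hα.1 hQT
  have hb : (quasiDet (j+1+1) (Hmat R m (j+1+1)) 0 0)⁻¹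
      = HQ R m (j+2) 0 0 - HQ R m (j+2) 0 (Fin.last (j+2)) *
          (HQ R m (j+2) (Fin.last (j+2)) (Fin.last (j+2)))⁻¹ *
          HQ R m (j+2) (Fin.last (j+2)) 0 := by
    have h := congrFun (congrFun hαmat 0) 0
    simp only [Matrix.of_apply, Fin.castSucc_zero] at h
    exact h
  -- β : delete last row, first col of M
  have hβ := submatrix_inverse (Hmat R m (j+2+1)) (HQ R m (j+2)) hMN hNM
    (Fin.last (j+2)) 0
    (inv_ne_zero (Hq_ne R hgen m (j+2) (Fin.last (j+2)) 0))
  rw [Fin.succAbove_last, Fin.succAbove_zero, Hsub_cs] at hβ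
  have hβmat : HQ R (m-1) (j+1) = _ := inv_unique hβ.1 hQW
  have hc1 : (quasiDet (j+1+1) (Hmat R (m-1) (j+1+1)) 0 0)⁻¹
      = HQ R m (j+2) 1 0 - HQ R m (j+2) 1 (Fin.last (j+2)) *
          (HQ R m (j+2) 0 (Fin.last (j+2)))⁻¹ * HQ R m (j+2) 0 0 := by
    have h := congrFun (congrFun hβmat 0) 0
    simp only [Matrix.of_apply, Fin.castSucc_zero, Fin.succ_zero_eq_one] at h
    exact h
  -- γ : delete first row, last col of M
  have hγ := submatrix_inverse (Hmat R m (j+2+1)) (HQ R m (j+2)) hMN hNM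
    0 (Fin.last (j+2))
    (inv_ne_zero (Hq_ne R hgen m (j+2) 0 (Fin.last (j+2))))
  rw [Fin.succAbove_last, Fin.succAbove_zero, Hsub_sc] at hγ
  have hγmat : HQ R (m-1) (j+1) = _ := inv_unique hγ.1 hQW
  have hc2 : (quasiDet (j+1+1) (Hmat R (m-1) (j+1+1)) 0 0)⁻¹
      = HQ R m (j+2) 0 1 - HQ R m (j+2) 0 0 *
          (HQ R m (j+2) (Fin.last (j+2)) 0)⁻¹ * HQ R m (j+2) (Fin.last (j+2)) 1 := by
    have h := congrFun (congrFun hγmat 0) 0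
    simp only [Matrix.of_apply, Fin.castSucc_zero, Fin.succ_zero_eq_one] at h
    exact h
  -- δ : delete first row/col of M ; identifies ⅟V with a Schur update of ⅟M
  have hδ := submatrix_inverse (Hmat R m (j+2+1)) (HQ R m (j+2)) hMN hNM 0 0
    (inv_ne_zero (Hq_ne R hgen m (j+2) 0 0))
  rw [Fin.succAbove_zero, Hsub_ss] at hδ
  have hδmat : HQ R (m-2) (j+1) = _ := inv_unique hδ.1 hNV
  have hμ : HQ R (m-2) (j+1) 0 (Fin.last (j+1))
      = HQ R m (j+2) 1 (Fin.last (j+2)) - HQ R m (j+2) 1 0 *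
          (HQ R m (j+2) 0 0)⁻¹ * HQ R m (j+2) 0 (Fin.last (j+2)) := by
    have h := congrFun (congrFun hδmat 0) (Fin.last (j+1))
    simp only [Matrix.of_apply, Fin.succ_zero_eq_one, Fin.succ_last] at h
    exact h
  have hν : HQ R (m-2) (j+1) (Fin.last (j+1)) 0
      = HQ R m (j+2) (Fin.last (j+2)) 1 - HQ R m (j+2) (Fin.last (j+2)) 0 *
          (HQ R m (j+2) 0 0)⁻¹ * HQ R m (j+2) 0 1 := by
    have h := congrFun (congrFun hδmat (Fin.last (j+1))) 0
    simp only [Matrix.of_apply, Fin.succ_zero_eq_one, Fin.succ_last] at h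
    exact h
  have ht : HQ R (m-2) (j+1) (Fin.last (j+1)) (Fin.last (j+1))
      = HQ R m (j+2) (Fin.last (j+2)) (Fin.last (j+2)) - HQ R m (j+2) (Fin.last (j+2)) 0 *
          (HQ R m (j+2) 0 0)⁻¹ * HQ R m (j+2) 0 (Fin.last (j+2)) := by
    have h := congrFun (congrFun hδmat (Fin.last (j+1))) (Fin.last (j+1))
    simp only [Matrix.of_apply, Fin.succ_last] at h
    exact h
  -- ε : delete last row/col of V
  have hε := submatrix_inverse (Hmat R (m-2) (j+1+1)) (HQ R (m-2) (j+1)) hVN hNV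
    (Fin.last (j+1)) (Fin.last (j+1))
    (inv_ne_zero (Hq_ne R hgen (m-2) (j+1) (Fin.last (j+1)) (Fin.last (j+1))))
  rw [Fin.succAbove_last, Hsub_cc] at hε
  have hεmat : HQ R (m-2) j = _ := inv_unique hε.1 hQE
  have he : (quasiDet (j+1) (Hmat R (m-2) (j+1)) 0 0)⁻¹
      = HQ R (m-2) (j+1) 0 0 - HQ R (m-2) (j+1) 0 (Fin.last (j+1)) *
          (HQ R (m-2) (j+1) (Fin.last (j+1)) (Fin.last (j+1)))⁻¹ *
          HQ R (m-2) (j+1) (Fin.last (j+1)) 0 := by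
    have h := congrFun (congrFun hεmat 0) 0
    simp only [Matrix.of_apply, Fin.castSucc_zero] at h
    exact h
  have hd : (quasiDet (j+1+1) (Hmat R (m-2) (j+1+1)) 0 0)⁻¹ = HQ R (m-2) (j+1) 0 0 := rfl
  have ha : quasiDet (j+2+1) (Hmat R m (j+2+1)) 0 0 = (HQ R m (j+2) 0 0)⁻¹ := by
    rw [show HQ R m (j+2) 0 0 = (quasiDet (j+2+1) (Hmat R m (j+2+1)) 0 0)⁻¹ from rfl, inv_inv]
  -- nonvanishing
  have hx0 : HQ R m (j+2) 0 0 ≠ 0 := inv_ne_zero (Hq_ne R hgen m (j+2) 0 0)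
  have hy0 : HQ R m (j+2) 0 (Fin.last (j+2)) ≠ 0 :=
    inv_ne_zero (Hq_ne R hgen m (j+2) (Fin.last (j+2)) 0)
  have hz0 : HQ R m (j+2) (Fin.last (j+2)) 0 ≠ 0 :=
    inv_ne_zero (Hq_ne R hgen m (j+2) 0 (Fin.last (j+2)))
  have hw0 : HQ R m (j+2) (Fin.last (j+2)) (Fin.last (j+2)) ≠ 0 :=
    inv_ne_zero (Hq_ne R hgen m (j+2) (Fin.last (j+2)) (Fin.last (j+2)))
  have hμ0 : HQ R (m-2) (j+1) 0 (Fin.last (j+1)) ≠ 0 :=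
    inv_ne_zero (Hq_ne R hgen (m-2) (j+1) (Fin.last (j+1)) 0)
  have hν0 : HQ R (m-2) (j+1) (Fin.last (j+1)) 0 ≠ 0 :=
    inv_ne_zero (Hq_ne R hgen (m-2) (j+1) 0 (Fin.last (j+1)))
  have ht0 : HQ R (m-2) (j+1) (Fin.last (j+1)) (Fin.last (j+1)) ≠ 0 :=
    inv_ne_zero (Hq_ne R hgen (m-2) (j+1) (Fin.last (j+1)) (Fin.last (j+1)))
  have hb0 : quasiDet (j+1+1) (Hmat R m (j+1+1)) 0 0 ≠ 0 := Hq_ne R hgen m (j+1) 0 0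
  have hc0 : quasiDet (j+1+1) (Hmat R (m-1) (j+1+1)) 0 0 ≠ 0 := Hq_ne R hgen (m-1) (j+1) 0 0
  -- abbreviate
  set x := HQ R m (j+2) 0 0
  set y := HQ R m (j+2) 0 (Fin.last (j+2))
  set z := HQ R m (j+2) (Fin.last (j+2)) 0
  set w := HQ R m (j+2) (Fin.last (j+2)) (Fin.last (j+2))
  set pt := HQ R m (j+2) 1 0
  set qt := HQ R m (j+2) 0 1
  set rt := HQ R m (j+2) 1 (Fin.last (j+2))
  set st := HQ R m (j+2) (Fin.last (j+2)) 1
  set μ := HQ R (m-2) (j+1) 0 (Fin.last (j+1))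
  set ν := HQ R (m-2) (j+1) (Fin.last (j+1)) 0
  set t := HQ R (m-2) (j+1) (Fin.last (j+1)) (Fin.last (j+1))
  set d0 := HQ R (m-2) (j+1) 0 0
  set a' := quasiDet (j+2+1) (Hmat R m (j+2+1)) 0 0
  set b' := quasiDet (j+1+1) (Hmat R m (j+1+1)) 0 0
  set c' := quasiDet (j+1+1) (Hmat R (m-1) (j+1+1)) 0 0
  set d' := quasiDet (j+1+1) (Hmat R (m-2) (j+1+1)) 0 0
  set e' := quasiDet (j+1) (Hmat R (m-2) (j+1)) 0 0
  -- scalar computation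
  have hde : d'⁻¹ - e'⁻¹ = μ * t⁻¹ * ν := by rw [hd, he, sub_sub_cancel]
  have hcμ : c' * μ = -(x⁻¹ * y) := by
    have key : c'⁻¹ * (-(x⁻¹ * y) * μ⁻¹) = 1 := by
      rw [hc1]
      rw [show (pt - rt * y⁻¹ * x) * (-(x⁻¹ * y) * μ⁻¹)
          = (rt * (y⁻¹ * (x * (x⁻¹ * y))) - pt * (x⁻¹ * y)) * μ⁻¹ from by noncomm_ring]
      rw [show x * (x⁻¹ * y) = y from by rw [← mul_assoc, mul_inv_cancel₀ hx0, one_mul]]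
      rw [inv_mul_cancel₀ hy0, mul_one]
      rw [show rt - pt * (x⁻¹ * y) = μ from by rw [hμ]; noncomm_ring]
      exact mul_inv_cancel₀ hμ0
    have hcc : -(x⁻¹ * y) * μ⁻¹ = c' := by
      have h2 := eq_inv_of_mul_eq_one_right key
      rwa [inv_inv] at h2
    calc c' * μ = -(x⁻¹ * y) * μ⁻¹ * μ := by rw [hcc]
      _ = -(x⁻¹ * y) * (μ⁻¹ * μ) := by rw [mul_assoc]
      _ = -(x⁻¹ * y) := by rw [inv_mul_cancel₀ hμ0, mul_one]
  have hνc : ν * c' = -(z * x⁻¹) := by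
    have key : -(ν⁻¹ * (z * x⁻¹)) * c'⁻¹ = 1 := by
      rw [hc2]
      rw [show -(ν⁻¹ * (z * x⁻¹)) * (qt - x * z⁻¹ * st)
          = ν⁻¹ * (z * (x⁻¹ * (x * (z⁻¹ * st))) - z * x⁻¹ * qt) from by noncomm_ring]
      rw [show x⁻¹ * (x * (z⁻¹ * st)) = z⁻¹ * st from by
        rw [← mul_assoc, inv_mul_cancel₀ hx0, one_mul]]
      rw [show z * (z⁻¹ * st) = st from by rw [← mul_assoc, mul_inv_cancel₀ hz0, one_mul]]
      rw [show st - z * x⁻¹ * qt = ν from by rw [hν]]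
      exact inv_mul_cancel₀ hν0
    have hcc : -(ν⁻¹ * (z * x⁻¹)) = c' := by
      have h2 := eq_inv_of_mul_eq_one_left key
      rwa [inv_inv] at h2
    calc ν * c' = ν * -(ν⁻¹ * (z * x⁻¹)) := by rw [hcc]
      _ = -((ν * ν⁻¹) * (z * x⁻¹)) := by rw [mul_neg, mul_assoc]
      _ = -(z * x⁻¹) := by rw [mul_inv_cancel₀ hν0, one_mul]
  have hzxy : z * x⁻¹ * y = w - t := by rw [ht, sub_sub_cancel]
  have hwood : b' = x⁻¹ + x⁻¹ * y * t⁻¹ * (z * x⁻¹) := by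
    have key : (x⁻¹ + x⁻¹ * y * t⁻¹ * (z * x⁻¹)) * b'⁻¹ = 1 := by
      rw [hb]
      calc (x⁻¹ + x⁻¹ * y * t⁻¹ * (z * x⁻¹)) * (x - y * w⁻¹ * z)
          = x⁻¹ * x + x⁻¹ * y * t⁻¹ * (z * (x⁻¹ * x))
            - (x⁻¹ * (y * w⁻¹ * z) + x⁻¹ * y * t⁻¹ * ((z * x⁻¹ * y) * (w⁻¹ * z))) := by
            noncomm_ring
        _ = 1 + x⁻¹ * y * t⁻¹ * (z * 1)
            - (x⁻¹ * (y * w⁻¹ * z) + x⁻¹ * y * t⁻¹ * ((w - t) * (w⁻¹ * z))) := by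
            rw [inv_mul_cancel₀ hx0, hzxy]
        _ = 1 + x⁻¹ * y * t⁻¹ * z
            - (x⁻¹ * (y * w⁻¹ * z) + x⁻¹ * y * t⁻¹ * (z - t * (w⁻¹ * z))) := by
            rw [mul_one, show (w - t) * (w⁻¹ * z) = z - t * (w⁻¹ * z) from by
              rw [sub_mul, ← mul_assoc, mul_inv_cancel₀ hw0, one_mul]]
        _ = 1 + x⁻¹ * y * t⁻¹ * z
            - (x⁻¹ * (y * w⁻¹ * z) + (x⁻¹ * y * t⁻¹ * z - x⁻¹ * y * ((t⁻¹ * t) * (w⁻¹ * z)))) := by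
            noncomm_ring
        _ = 1 := by rw [inv_mul_cancel₀ ht0, one_mul]; noncomm_ring
    have h2 := eq_inv_of_mul_eq_one_left key
    rw [inv_inv] at h2
    exact h2.symm
  rw [hde]
  have hkey : c' * (μ * t⁻¹ * ν) * c' = x⁻¹ * y * t⁻¹ * (z * x⁻¹) := by
    calc c' * (μ * t⁻¹ * ν) * c' = (c' * μ) * t⁻¹ * (ν * c') := by noncomm_ring
      _ = -(x⁻¹ * y) * t⁻¹ * -(z * x⁻¹) := by rw [hcμ, hνc]
      _ = x⁻¹ * y * t⁻¹ * (z * x⁻¹) := by noncomm_ring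
  rw [hkey, hwood, add_sub_cancel_right, ha]

lemma hirota_base (n : ℤ) :
    Delta R (1+1) n =
      Delta R 1 (n + 1) -
        Delta R 1 n * ((Delta R 1 (n - 1))⁻¹ - (Delta R 0 n)⁻¹) * Delta R 1 n := by
  have h1 : ∀ m : ℤ, Delta R 1 m = R m := by
    intro m
    show (Matrix.of fun a b : Fin 1 =>
      R (m + ((0:ℕ) + 1 : ℕ) + 1 - ((a : ℤ) + 1) - ((b : ℤ) + 1))) 0 0 = R m
    simp only [Matrix.of_apply]
    norm_num
  have h2 : Delta R 2 n = R (n+1) - R n * (R (n-1))⁻¹ * R n := by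
    show quasiDet 2 _ 0 0 = _
    rw [quasiDet]
    simp only [Fin.sum_univ_succ, Fin.sum_univ_zero, add_zero, Matrix.of_apply,
      Matrix.submatrix_apply]
    norm_num
    rw [show ∀ (M : Matrix (Fin 1) (Fin 1) D), quasiDet 1 M 0 0 = M 0 0 from fun _ => rfl]
    simp only [Matrix.submatrix_apply, Matrix.of_apply]
    norm_num
    have e : ∀ a b : ℤ, a = b → R a = R b := fun a b h => by rw [h]
    rw [e (n+2-1) (n+1) (by ring), e (n+2-1-2) (n-1) (by ring), e (n+2+1-2-1) n (by ring)]
  rw [h2, h1, h1, h1, show Delta R 0 n = 0 from rfl, _root_.inv_zero, sub_zero]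

include hgen in
lemma hirota_all :
    ∀ i : ℕ, 1 ≤ i → ∀ n : ℤ,
      Delta R (i + 1) n =
        Delta R i (n + 1) -
          Delta R i n * ((Delta R i (n - 1))⁻¹ - (Delta R (i - 1) n)⁻¹) * Delta R i n := by
  intro i hi n
  rcases i with _ | _ | j
  · exact absurd hi (by omega)
  · exact hirota_base R n
  · exact hirota_main R hgen j n

end Aux

/-- Theorem 3.21 of Di Francesco–Kedem (discrete noncommutative Hirota equation):
under the genericity assumption that every quasi-determinant of every finite square
submatrix of the Hankel matrix `(R_{-a-b})_{a,b ∈ ℤ}` is nonzero, the quasi-Wronskians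
satisfy `Δ_{i+1,n} = Δ_{i,n+1} - Δ_{i,n}·(Δ_{i,n-1}⁻¹ - Δ_{i-1,n}⁻¹)·Δ_{i,n}`
for all `i ≥ 1`, `n ∈ ℤ` (with the convention `Δ_{0,n}⁻¹ = 0`). -/
theorem stmt10 {D : Type*} [DivisionRing D] (R : ℤ → D)
    (hgen : ∀ k : ℕ, ∀ ρ γ : Fin (k + 1) → ℤ,
      Function.Injective ρ → Function.Injective γ →
      ∀ p q : Fin (k + 1),
        quasiDet (k + 1) (Matrix.of fun a b => R (-(ρ a) - γ b)) p q ≠ 0) :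
    ∀ i : ℕ, 1 ≤ i → ∀ n : ℤ,
      Delta R (i + 1) n =
        Delta R i (n + 1) -
          Delta R i n * ((Delta R i (n - 1))⁻¹ - (Delta R (i - 1) n)⁻¹) * Delta R i n :=
  hirota_all R hgen

end Stmt10
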